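/- Let P_n be the path on n vertices and let k ≥ 2 be an integer with k ≤ n. Then the Steiner k-Wiener index of P_n equals SW_k(P_n) = Σ_{j=k−1}^{n−1} j·(n−j)·C(j−1, k−2) = (k−1)·C(n+1, k+1), where C(·,·) denotes binomial coefficients. -/

import Mathlib

open Finset SimpleGraph Polynomial

/-- The Steiner distance of a vertex set `S`: the minimum number of edges of a
connected subgraph of `G` whose vertex set contains `S`. -/
noncomputable def steinerDist {V : Type*} (G : SimpleGraph V) (S : Set V) : ℕ :=
  sInf {n | ∃ H : G.Subgraph, H.Connected ∧ S ⊆ H.verts ∧ H.edgeSet.ncard = n}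

/-- The Steiner `k`-Wiener index. -/
noncomputable def SW {V : Type*} [Fintype V] [DecidableEq V] (k : ℕ) (G : SimpleGraph V) : ℕ :=
  ∑ S ∈ Finset.powersetCard k (Finset.univ : Finset V), steinerDist G (S : Set V)

/-- The Steiner `k`-hyper-Wiener index. -/
noncomputable def SWW {V : Type*} [Fintype V] [DecidableEq V] (k : ℕ) (G : SimpleGraph V) : ℝ :=
  (1/2) * ∑ S ∈ Finset.powersetCard k (Finset.univ : Finset V), (steinerDist G (S : Set V) : ℝ)
    + (1/2) * ∑ S ∈ Finset.powersetCard k (Finset.univ : Finset V), (steinerDist G (S : Set V) : ℝ) ^ 2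

/-- The Steiner `k`-Hosoya polynomial `∑_{m ≥ 0} d_k(G,m) x^m`, written as
`∑_{S ⊆ V(G), |S| = k} x^{d(S)}`. -/
noncomputable def SH {V : Type*} [Fintype V] [DecidableEq V] (k : ℕ) (G : SimpleGraph V) :
    Polynomial ℝ :=
  ∑ S ∈ Finset.powersetCard k (Finset.univ : Finset V), Polynomial.X ^ (steinerDist G (S : Set V))

/-- The Wiener index `W(G) = ∑_{{u,v} ⊆ V(G)} d(u,v)` (each unordered pair counted once). -/
noncomputable def wiener {V : Type*} [Fintype V] [DecidableEq V] (G : SimpleGraph V) : ℝ :=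
  (∑ p ∈ Finset.univ.offDiag, (G.dist p.1 p.2 : ℝ)) / 2

/-- `\overline{WW}(G) = ∑_{{u,v} ⊆ V(G)} d(u,v)²`. -/
noncomputable def WWbar {V : Type*} [Fintype V] [DecidableEq V] (G : SimpleGraph V) : ℝ :=
  (∑ p ∈ Finset.univ.offDiag, (G.dist p.1 p.2 : ℝ) ^ 2) / 2

/-- The set of ordered triples of pairwise distinct vertices. -/
def O3 (V : Type*) [Fintype V] [DecidableEq V] : Finset (V × V × V) :=
  Finset.univ.filter fun t => t.1 ≠ t.2.1 ∧ t.1 ≠ t.2.2 ∧ t.2.1 ≠ t.2.2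

/-- `\widehat{WW}(G) = ∑_{(u,v,w) ∈ O₃(G)} d(u,v)·d(u,w)`. -/
noncomputable def WWhat {V : Type*} [Fintype V] [DecidableEq V] (G : SimpleGraph V) : ℝ :=
  ∑ t ∈ O3 V, (G.dist t.1 t.2.1 : ℝ) * (G.dist t.1 t.2.2 : ℝ)

/-- `z` is a median of the triple `u, v, w`: it lies on a shortest `u,v`-path, a shortest
`u,w`-path and a shortest `v,w`-path. -/
def IsMedian {V : Type*} (G : SimpleGraph V) (u v w z : V) : Prop :=
  G.dist u z + G.dist z v = G.dist u v ∧
  G.dist u z + G.dist z w = G.dist u w ∧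
  G.dist v z + G.dist z w = G.dist v w

/-- A modular graph: a connected graph in which every triple of vertices has a median. -/
def IsModular {V : Type*} (G : SimpleGraph V) : Prop :=
  G.Connected ∧ ∀ u v w : V, ∃ z : V, IsMedian G u v w z

/-- The hypercube graph `Q_n` on `Fin n → Bool`: two vertices are adjacent iff they differ
in exactly one coordinate. -/
def hypercubeGraph (n : ℕ) : SimpleGraph (Fin n → Bool) :=
  SimpleGraph.fromRel fun x y => ∃! i, x i ≠ y i

/-- A partial cube: a connected graph isometrically embeddable into a hypercube. -/
def IsPartialCube {V : Type*} (G : SimpleGraph V) : Prop :=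
  G.Connected ∧ ∃ (n : ℕ) (f : V → (Fin n → Bool)),
    ∀ u v : V, (hypercubeGraph n).dist (f u) (f v) = G.dist u v

/-- The Djoković–Winkler relation Θ on (edges viewed as) unordered pairs:
`s(u₁,v₁) Θ s(u₂,v₂)` iff `d(u₁,u₂) + d(v₁,v₂) ≠ d(u₁,v₂) + d(v₁,u₂)`. -/
def theta {V : Type*} (G : SimpleGraph V) (e f : Sym2 V) : Prop :=
  ∃ u₁ v₁ u₂ v₂ : V, e = s(u₁, v₁) ∧ f = s(u₂, v₂) ∧
    G.dist u₁ u₂ + G.dist v₁ v₂ ≠ G.dist u₁ v₂ + G.dist v₁ u₂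

/-- `E` together with the component data `U`, `U'` is the family of Θ-classes of the
partial cube `G`: each `E i` is a Θ-class of edges, the classes are pairwise distinct and
cover the edge set, and `U i`, `U' i` are (the vertex sets of) the two connected components
of `G - E i`. -/
def IsThetaClassSetup {V : Type*} (G : SimpleGraph V) (d : ℕ)
    (E : Fin d → Set (Sym2 V)) (U U' : Fin d → Set V) : Prop :=
  (∀ i, ∃ e ∈ G.edgeSet, E i = {f | f ∈ G.edgeSet ∧ theta G f e}) ∧
  Function.Injective E ∧
  G.edgeSet = ⋃ i, E i ∧
  ∀ i, ∃ c c' : (G.deleteEdges (E i)).ConnectedComponent, c ≠ c' ∧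
    U i = c.supp ∧ U' i = c'.supp ∧
    ∀ b : (G.deleteEdges (E i)).ConnectedComponent, b = c ∨ b = c'

lemma walk_length_lb {n : ℕ} {x y : Fin n} (w : (pathGraph n).Walk x y) :
    x.val - y.val ≤ w.length ∧ y.val - x.val ≤ w.length := by
  induction w with
  | nil => simp
  | cons h p ih =>
    rw [pathGraph_adj] at h
    simp only [Walk.length_cons]
    omega

lemma exists_mono_walk {n : ℕ} : ∀ (d : ℕ) (a b : Fin n), b.val = a.val + d →
    ∃ w : (pathGraph n).Walk a b, w.length = d ∧ w.IsPath ∧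
      ∀ x : Fin n, x ∈ w.support ↔ (a.val ≤ x.val ∧ x.val ≤ b.val) := by
  intro d
  induction d with
  | zero =>
    intro a b h
    have hab : a = b := Fin.ext (by omega)
    subst hab
    refine ⟨Walk.nil, rfl, Walk.IsPath.nil, ?_⟩
    intro x
    simp only [Walk.support_nil, List.mem_singleton]
    constructor
    · rintro rfl; omega
    · rintro ⟨h1, h2⟩; exact Fin.ext (by omega)
  | succ d ih =>
    intro a b h
    have ha1 : a.val + 1 < n := by omega
    set a' : Fin n := ⟨a.val + 1, ha1⟩ with ha'
    have hadj : (pathGraph n).Adj a a' := pathGraph_adj.mpr (Or.inl rfl)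
    obtain ⟨w, hl, hp, hs⟩ := ih a' b (by simp [ha']; omega)
    refine ⟨Walk.cons hadj w, by simp [hl], hp.cons ?_, ?_⟩
    · intro hmem
      have := (hs a).mp hmem
      simp [ha'] at this
    · intro x
      simp only [Walk.support_cons, List.mem_cons, hs x]
      constructor
      · rintro (rfl | ⟨h1, h2⟩) <;> simp_all <;> omega
      · rintro ⟨h1, h2⟩
        rcases eq_or_lt_of_le h1 with heq | hlt
        · left; exact (Fin.ext heq).symm
        · right; simp [ha']; omega

lemma steinerDist_path {n : ℕ} (S : Finset (Fin n)) (hS : S.Nonempty) :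
    steinerDist (pathGraph n) ↑S = (S.max' hS).val - (S.min' hS).val := by
  set a := S.min' hS with ha
  set b := S.max' hS with hb
  have hab : a.val ≤ b.val := S.min'_le b (S.max'_mem hS)
  obtain ⟨w, hlen, hp, hsupp⟩ := exists_mono_walk (b.val - a.val) a b (by omega)
  have hmem : (b.val - a.val) ∈
      {m | ∃ H : (pathGraph n).Subgraph, H.Connected ∧ ↑S ⊆ H.verts ∧ H.edgeSet.ncard = m} := by
    refine ⟨w.toSubgraph, w.toSubgraph_connected, ?_, ?_⟩
    · intro x hx
      rw [Walk.mem_verts_toSubgraph, hsupp]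
      rw [Finset.mem_coe] at hx
      exact ⟨Fin.val_le_of_le (S.min'_le x hx), Fin.val_le_of_le (S.le_max' x hx)⟩
    · have hset : w.toSubgraph.edgeSet = ↑w.edges.toFinset := by
        ext e; simp [Walk.mem_edges_toSubgraph]
      rw [hset, Set.ncard_coe_finset, List.toFinset_card_of_nodup hp.isTrail.edges_nodup,
        Walk.length_edges, hlen]
  have hlb : ∀ m ∈ {m | ∃ H : (pathGraph n).Subgraph, H.Connected ∧ ↑S ⊆ H.verts ∧
      H.edgeSet.ncard = m}, b.val - a.val ≤ m := by
    rintro m ⟨H, hconn, hsub, rfl⟩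
    have haH : a ∈ H.verts := hsub (by exact_mod_cast S.min'_mem hS)
    have hbH : b ∈ H.verts := hsub (by exact_mod_cast S.max'_mem hS)
    have hreach : H.coe.Reachable ⟨a, haH⟩ ⟨b, hbH⟩ :=
      hconn.coe.preconnected ⟨a, haH⟩ ⟨b, hbH⟩
    classical
    obtain ⟨p0⟩ := hreach
    let p := p0.toPath
    have hq : ((p.val).map H.hom).IsPath :=
      Walk.map_isPath_of_injective Subtype.val_injective p.2
    set q := (p.val).map H.hom with hqdef
    have hq1 : b.val - a.val ≤ q.length := (walk_length_lb q).2
    have hedges : q.edges.toFinset ⊆ (Set.toFinite H.edgeSet).toFinset := by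
      intro e he
      rw [List.mem_toFinset] at he
      rw [Set.Finite.mem_toFinset]
      rw [hqdef, Walk.edges_map, List.mem_map] at he
      obtain ⟨e', he', rfl⟩ := he
      have := Walk.edges_subset_edgeSet _ he'
      revert this
      refine Sym2.ind (fun u v h => ?_) e'
      rw [SimpleGraph.mem_edgeSet, Subgraph.coe_adj] at h
      exact h
    calc b.val - a.val ≤ q.length := hq1
      _ = q.edges.length := (Walk.length_edges q).symm
      _ = q.edges.toFinset.card := (List.toFinset_card_of_nodup hq.isTrail.edges_nodup).symm
      _ ≤ (Set.toFinite H.edgeSet).toFinset.card := Finset.card_le_card hedges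
      _ = H.edgeSet.ncard := (Set.ncard_eq_toFinset_card _ _).symm
  refine le_antisymm (Nat.sInf_le hmem) (hlb _ (Nat.sInf_mem ⟨_, hmem⟩))

lemma sum_range_choose'' (N K : ℕ) : ∑ j ∈ range N, Nat.choose j K = N.choose (K+1) := by
  induction N with
  | zero => simp
  | succ N ih =>
    rw [Finset.sum_range_succ, ih, Nat.choose_succ_succ]
    simp [Nat.succ_eq_add_one]
    omega

lemma sum_aux (N K : ℕ) : ∑ j ∈ range N, (N - j) * Nat.choose j K = (N+1).choose (K+2) := by
  induction N with
  | zero => simp [Nat.choose_eq_zero_of_lt]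
  | succ N ih =>
    have hstep : ∀ j ∈ range (N+1), (N+1-j) * j.choose K = (N-j)*j.choose K + j.choose K := by
      intro j hj
      rw [mem_range] at hj
      have h : N + 1 - j = (N - j) + 1 := by omega
      rw [h, add_mul, one_mul]
    rw [Finset.sum_congr rfl hstep, Finset.sum_add_distrib,
      Finset.sum_range_succ (fun j => (N-j)*Nat.choose j K), ih, sum_range_choose'',
      Nat.choose_succ_succ (N+1) (K+1)]
    have h2 : K + 1 + 1 = K + 2 := rfl
    simp only [Nat.succ_eq_add_one, h2, Nat.sub_self, Nat.zero_mul]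
    omega

lemma count_j (n k j : ℕ) (hk : 1 ≤ k) (hj : j < n) :
    ((powersetCard k (univ : Finset (Fin n))).filter
      (fun S => (∃ a ∈ S, a.val ≤ j) ∧ ∃ b ∈ S, j < b.val)).card
    + ((j+1).choose k + (n-1-j).choose k) = n.choose k := by
  classical
  have hLow : ∀ m ∈ range (j+1), m < n := fun m hm => by rw [mem_range] at hm; omega
  have hHigh : ∀ m ∈ Ico (j+1) n, m < n := fun m hm => by rw [mem_Ico] at hm; omega
  set Low : Finset (Fin n) := Finset.attachFin (range (j+1)) hLow with hLowdef
  set High : Finset (Fin n) := Finset.attachFin (Ico (j+1) n) hHigh with hHighdef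
  have hneg : (powersetCard k (univ : Finset (Fin n))).filter
      (fun S => ¬((∃ a ∈ S, a.val ≤ j) ∧ ∃ b ∈ S, j < b.val))
      = powersetCard k Low ∪ powersetCard k High := by
    ext T
    simp only [mem_filter, mem_union, mem_powersetCard_univ, mem_powersetCard]
    constructor
    · rintro ⟨hcard', hnot⟩
      have hcard := hcard'.2
      rw [not_and_or] at hnot
      push_neg at hnot
      rcases hnot with h | h
      · right
        refine ⟨fun x hx => ?_, hcard⟩
        rw [hHighdef, Finset.mem_attachFin, mem_Ico]
        exact ⟨h x hx, x.isLt⟩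
      · left
        refine ⟨fun x hx => ?_, hcard⟩
        rw [hLowdef, Finset.mem_attachFin, mem_range]
        exact Nat.lt_succ_of_le (h x hx)
    · rintro (⟨hsub, hcard⟩ | ⟨hsub, hcard⟩)
      · refine ⟨⟨Finset.subset_univ T, hcard⟩, ?_⟩
        rw [not_and_or]
        right
        push_neg
        intro b hb
        have := hsub hb
        rw [hLowdef, Finset.mem_attachFin, mem_range] at this
        omega
      · refine ⟨⟨Finset.subset_univ T, hcard⟩, ?_⟩
        rw [not_and_or]
        left
        push_neg
        intro a ha
        have := hsub ha
        rw [hHighdef, Finset.mem_attachFin, mem_Ico] at this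
        omega
  have hdisj : Disjoint (powersetCard k Low) (powersetCard k High) := by
    rw [Finset.disjoint_left]
    intro T hT1 hT2
    rw [mem_powersetCard] at hT1 hT2
    obtain ⟨x, hx⟩ : T.Nonempty := Finset.card_pos.mp (by rw [hT1.2]; omega)
    have h1 := hT1.1 hx
    have h2 := hT2.1 hx
    rw [hLowdef, Finset.mem_attachFin, mem_range] at h1
    rw [hHighdef, Finset.mem_attachFin, mem_Ico] at h2
    omega
  have htot := Finset.card_filter_add_card_filter_not
    (s := powersetCard k (univ : Finset (Fin n)))
    (p := fun S => (∃ a ∈ S, a.val ≤ j) ∧ ∃ b ∈ S, j < b.val)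
  rw [hneg, Finset.card_union_of_disjoint hdisj, Finset.card_powersetCard,
    Finset.card_powersetCard, hLowdef, hHighdef, Finset.card_attachFin, Finset.card_attachFin,
    Finset.card_range, Nat.card_Ico, Finset.card_powersetCard, Finset.card_univ,
    Fintype.card_fin] at htot
  have heq : n - (j+1) = n - 1 - j := by omega
  rw [heq] at htot
  exact htot

lemma SW_path_key (n k : ℕ) (hk : 2 ≤ k) (hkn : k ≤ n) :
    SW k (pathGraph n) + ((n+1).choose (k+1) + n.choose (k+1)) = n * n.choose k := by
  classical
  have h1 : SW k (pathGraph n) = ∑ S ∈ powersetCard k (univ : Finset (Fin n)),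
      ((range n).filter (fun j => (∃ a ∈ S, a.val ≤ j) ∧ ∃ b ∈ S, j < b.val)).card := by
    refine Finset.sum_congr rfl (fun S hS => ?_)
    rw [mem_powersetCard_univ] at hS
    have hne : S.Nonempty := Finset.card_pos.mp (by omega)
    rw [steinerDist_path S hne]
    have hfe : (range n).filter (fun j => (∃ a ∈ S, a.val ≤ j) ∧ ∃ b ∈ S, j < b.val)
        = Ico (S.min' hne).val (S.max' hne).val := by
      ext j
      simp only [mem_filter, mem_range, mem_Ico]
      constructor
      · rintro ⟨hjn, ⟨a, ha, haj⟩, ⟨b, hb, hjb⟩⟩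
        exact ⟨le_trans (S.min'_le a ha) haj, lt_of_lt_of_le hjb (S.le_max' b hb)⟩
      · rintro ⟨h1, h2⟩
        exact ⟨lt_trans h2 (S.max' hne).isLt,
          ⟨S.min' hne, S.min'_mem hne, h1⟩, ⟨S.max' hne, S.max'_mem hne, h2⟩⟩
    rw [hfe, Nat.card_Ico]
  rw [h1]
  simp only [Finset.card_filter]
  rw [Finset.sum_comm]
  have h3 : ∀ j ∈ range n,
      (∑ S ∈ powersetCard k (univ : Finset (Fin n)),
        if (∃ a ∈ S, a.val ≤ j) ∧ ∃ b ∈ S, j < b.val then 1 else 0)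
      + ((j+1).choose k + (n-1-j).choose k) = n.choose k := by
    intro j hj
    rw [← Finset.card_filter]
    exact count_j n k j (by omega) (mem_range.mp hj)
  have h4 := Finset.sum_congr rfl h3
  rw [Finset.sum_add_distrib, Finset.sum_add_distrib, Finset.sum_const, Finset.card_range,
    smul_eq_mul] at h4
  have h5 : ∑ j ∈ range n, (j+1).choose k = (n+1).choose (k+1) := by
    have hs := Finset.sum_range_succ' (fun m => Nat.choose m k) n
    rw [sum_range_choose''] at hs
    have h0 : Nat.choose 0 k = 0 := Nat.choose_eq_zero_of_lt (by omega)
    omega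
  have h6 : ∑ j ∈ range n, (n-1-j).choose k = n.choose (k+1) := by
    have hs := Finset.sum_range_reflect (fun m => Nat.choose m k) n
    rw [sum_range_choose''] at hs
    exact hs
  omega

lemma icc_identity (n k : ℕ) (hk : 2 ≤ k) (hkn : k ≤ n) :
    ∑ j ∈ Icc (k-1) (n-1), j * (n - j) * Nat.choose (j-1) (k-2)
      = (k-1) * (n+1).choose (k+1) := by
  have step1 : ∀ j ∈ Icc (k-1) (n-1), j * (n-j) * Nat.choose (j-1) (k-2)
      = (k-1) * ((n-j) * Nat.choose j (k-1)) := by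
    intro j hj
    rw [mem_Icc] at hj
    have hj1 : 1 ≤ j := by omega
    have hsm := Nat.add_one_mul_choose_eq (j-1) (k-2)
    have hsj : (j-1) + 1 = j := by omega
    have hsk : (k-2) + 1 = k-1 := by omega
    rw [hsj, hsk] at hsm
    calc j * (n-j) * ((j-1).choose (k-2)) = (n-j) * (j * (j-1).choose (k-2)) := by ring
      _ = (n-j) * (j.choose (k-1) * (k-1)) := by rw [hsm]
      _ = (k-1) * ((n-j) * j.choose (k-1)) := by ring
  rw [Finset.sum_congr rfl step1, ← Finset.mul_sum]
  congr 1
  have hsubs : Icc (k-1) (n-1) ⊆ range n := by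
    intro j hj
    rw [mem_Icc] at hj
    rw [mem_range]
    omega
  have hzero : ∀ j ∈ range n, j ∉ Icc (k-1) (n-1) → (n-j) * Nat.choose j (k-1) = 0 := by
    intro j hjr hjni
    rw [mem_range] at hjr
    rw [mem_Icc] at hjni
    have : j < k - 1 := by omega
    rw [Nat.choose_eq_zero_of_lt (by omega), mul_zero]
  rw [Finset.sum_subset hsubs hzero, sum_aux n (k-1)]
  congr 1
  omega


/-- `SW_k(P_n) = ∑_{j=k-1}^{n-1} j(n-j)·C(j-1,k-2) = (k-1)·C(n+1,k+1)`. -/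
theorem steiner_wiener_path (n k : ℕ) (hk : 2 ≤ k) (hkn : k ≤ n) :
    SW k (SimpleGraph.pathGraph n)
        = ∑ j ∈ Finset.Icc (k - 1) (n - 1), j * (n - j) * Nat.choose (j - 1) (k - 2) ∧
    SW k (SimpleGraph.pathGraph n) = (k - 1) * Nat.choose (n + 1) (k + 1) := by
  have key := SW_path_key n k hk hkn
  have e1 : (n+1) * n.choose k = (n+1).choose (k+1) * (k+1) := Nat.add_one_mul_choose_eq n k
  have e2 : (n+1).choose (k+1) = n.choose k + n.choose (k+1) := Nat.choose_succ_succ n k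
  have h2 : SW k (SimpleGraph.pathGraph n) = (k - 1) * Nat.choose (n + 1) (k + 1) := by
    have t1 : SW k (SimpleGraph.pathGraph n) + 2 * (n+1).choose (k+1)
        = (n+1).choose (k+1) * (k+1) := by
      have t2 : n * n.choose k + n.choose k = (n+1) * n.choose k := by ring
      generalize hX : (n+1).choose (k+1) * (k+1) = X at e1
      omega
    obtain ⟨m, rfl⟩ : ∃ m, k = 2 + m := ⟨k - 2, by omega⟩
    have t3 : SW (2+m) (SimpleGraph.pathGraph n) + 2 * (n+1).choose (2+m+1)
        = (2+m-1) * (n+1).choose (2+m+1) + 2 * (n+1).choose (2+m+1) := by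
      rw [t1]
      have h5 : 2 + m - 1 = m + 1 := by omega
      rw [h5]
      ring
    exact Nat.add_right_cancel t3
  exact ⟨h2.trans (icc_identity n k hk hkn).symm, h2⟩
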